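/- Let U = (U_1,…,U_d) be a d-tuple of numeration systems, A ⊂ ℤ^d a finite alphabet, and N a trim deterministic finite automaton accepting {(u,v) ∈ (A × (A_U ∪ −A_U))* : v ∈ 0*ν_U(u)}, with initial state i. Let p be a state of N, a ∈ A a letter, ℓ_1, ℓ_2 ∈ ℕ, and suppose there exist words v_1, v_2 ∈ (A_U ∪ −A_U)* not beginning with the letter 0 such that reading (0^{ℓ_1} a, v_1) and (0^{ℓ_2} a, v_2) from i both lead to p. Then ℓ_1 = ℓ_2 and v_1 = v_2. -/

import Mathlib

open scoped Classical

/-- A numeration system: a strictly increasing sequence of positive integers with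
`U 0 = 1` and bounded quotients `U (i+1) / U i`. -/
structure NumSys where
  U : ℕ → ℕ
  pos : ∀ i, 0 < U i
  base : U 0 = 1
  mono : StrictMono U
  bdd : ∃ C : ℕ, ∀ i, U (i + 1) ≤ C * U i

/-- The value `val_U` of a word `a_ℓ ⋯ a_0` over `ℤ` (most significant digit first):
`Σ_{i=0}^ℓ a_i U(i)`. -/
def valU (N : NumSys) (w : List ℤ) : ℤ :=
  ∑ i ∈ Finset.range w.length, w.reverse.getD i 0 * (N.U i : ℤ)

/-- `w` is the greedy `U`-representation of `n`: its value is `n`, its digits are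
nonnegative, its leading digit is nonzero, and every suffix `a_j ⋯ a_0` satisfies
`Σ_{i=0}^j a_i U(i) < U(j+1)`.  (For `n = 0` this forces `w = ε`.) -/
def IsGreedy (N : NumSys) (n : ℕ) (w : List ℤ) : Prop :=
  valU N w = (n : ℤ) ∧ (∀ a ∈ w, 0 ≤ a) ∧ w.head? ≠ some 0 ∧
    ∀ j, j < w.length → valU N (w.drop (w.length - (j + 1))) < (N.U (j + 1) : ℤ)

/-- The greedy `U`-representation `rep_U n` (the unique word satisfying `IsGreedy`). -/
noncomputable def repU (N : NumSys) (n : ℕ) : List ℤ :=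
  if h : ∃ w, IsGreedy N n w then h.choose else []

/-- `⌈sup_i U(i+1)/U(i)⌉`. -/
noncomputable def capU (N : NumSys) : ℤ :=
  ⌈⨆ i : ℕ, (N.U (i + 1) : ℝ) / (N.U i : ℝ)⌉

/-- The canonical alphabet `A_U = {0, …, ⌈sup_i U(i+1)/U(i)⌉ - 1}`. -/
noncomputable def alphU (N : NumSys) : Set ℤ := Set.Icc 0 (capU N - 1)

/-- The extended normalization `ν_U`: `rep_U(val_U w)` if `val_U w ≥ 0`, and the
digitwise negation of `rep_U(-val_U w)` otherwise. -/
noncomputable def normExt (N : NumSys) (w : List ℤ) : List ℤ :=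
  if 0 ≤ valU N w then repU N (valU N w).toNat
  else (repU N (-valU N w).toNat).map (fun a => -a)

/-- The `j`-th component word of a word over `ℤ^d`. -/
def comp {d : ℕ} (w : List (Fin d → ℤ)) (j : Fin d) : List ℤ := w.map (fun x => x j)

/-- Pad a word over `ℤ` with leading zeroes to length `L`. -/
def padZero (L : ℕ) (w : List ℤ) : List ℤ := List.replicate (L - w.length) 0 ++ w

/-- The `d`-dimensional extended normalization `ν_U`: the componentwise normalizations,
padded with leading zeroes to a common length. -/
noncomputable def normVec {d : ℕ} (Ns : Fin d → NumSys) (w : List (Fin d → ℤ)) :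
    List (Fin d → ℤ) :=
  (List.range (Finset.univ.sup fun j => (normExt (Ns j) (comp w j)).length)).map
    (fun i => fun j =>
      (padZero (Finset.univ.sup fun j' => (normExt (Ns j') (comp w j')).length)
        (normExt (Ns j) (comp w j))).getD i 0)

/-- The delay `d_U(w) = |ν_U(w)| - |w|`. -/
noncomputable def delayVec {d : ℕ} (Ns : Fin d → NumSys) (w : List (Fin d → ℤ)) : ℤ :=
  ((normVec Ns w).length : ℤ) - (w.length : ℤ)

/-- The product alphabet `A_U = A_{U_1} × ⋯ × A_{U_d}`. -/
noncomputable def alphProd {d : ℕ} (Ns : Fin d → NumSys) : Set (Fin d → ℤ) :=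
  {b | ∀ j, b j ∈ alphU (Ns j)}

/-- The alphabet `A_U ∪ -A_U`. -/
noncomputable def symAlph {d : ℕ} (Ns : Fin d → NumSys) : Set (Fin d → ℤ) :=
  {b | ∀ j, b j ∈ alphU (Ns j)} ∪ {b | ∀ j, -b j ∈ alphU (Ns j)}

/-- The language `{(u,v) ∈ (A × (A_U ∪ -A_U))* : v ∈ 0* ν_U(u)}`, where a word over
pairs is identified with the pair of its component words. -/
noncomputable def NormLangVec {d : ℕ} (Ns : Fin d → NumSys) (A : Set (Fin d → ℤ)) :
    Language ((Fin d → ℤ) × (Fin d → ℤ)) :=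
  {p | (∀ x ∈ p, x.1 ∈ A ∧ x.2 ∈ symAlph Ns) ∧
    ∃ k : ℕ, p.map Prod.snd =
      List.replicate k (0 : Fin d → ℤ) ++ normVec Ns (p.map Prod.fst)}

/-- A deterministic finite automaton with (possibly) partial transition function. -/
structure PDFA (α : Type) (σ : Type) where
  step : σ → α → Option σ
  start : σ
  accept : Set σ

/-- The state (if any) reached from `q` after reading `w`. -/
def PDFA.evalFrom {α σ : Type} (M : PDFA α σ) (q : σ) (w : List α) : Option σ :=
  w.foldl (fun o a => o.bind fun p => M.step p a) (some q)

/-- The language accepted by a partial DFA. -/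
def PDFA.accepts {α σ : Type} (M : PDFA α σ) : Language α :=
  {w | ∃ q ∈ M.accept, M.evalFrom M.start w = some q}

/-- A partial DFA is trim if every state is accessible from the initial state and
co-accessible to some final state. -/
def PDFA.Trim {α σ : Type} (M : PDFA α σ) : Prop :=
  ∀ q : σ, (∃ w, M.evalFrom M.start w = some q) ∧
    (∃ w, ∃ p ∈ M.accept, M.evalFrom q w = some p)

lemma valU_replicate_append (N : NumSys) (ℓ : ℕ) (x : List ℤ) :
    valU N (List.replicate ℓ 0 ++ x) = valU N x := by
  unfold valU
  rw [List.reverse_append, List.reverse_replicate, List.length_append,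
    List.length_replicate, Nat.add_comm ℓ x.length]
  rw [← Finset.sum_subset (Finset.range_subset_range.2 (Nat.le_add_right x.length ℓ))]
  · apply Finset.sum_congr rfl
    intro i hi
    rw [List.getD_append _ _ _ _ (by simpa using (Finset.mem_range.1 hi))]
  · intro i hi1 hi2
    have hlen : x.length ≤ i := by
      by_contra h
      exact hi2 (Finset.mem_range.2 (by omega))
    rw [List.getD_append_right _ _ _ _ (by simpa using hlen)]
    simp [List.getD]

lemma normExt_replicate_append (N : NumSys) (ℓ : ℕ) (x : List ℤ) :
    normExt N (List.replicate ℓ 0 ++ x) = normExt N x := by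
  unfold normExt
  rw [valU_replicate_append]

lemma comp_replicate_append {d : ℕ} (ℓ : ℕ) (w : List (Fin d → ℤ)) (j : Fin d) :
    comp (List.replicate ℓ 0 ++ w) j = List.replicate ℓ 0 ++ comp w j := by
  simp [comp, List.map_replicate]

lemma normVec_replicate_append {d : ℕ} (Ns : Fin d → NumSys) (ℓ : ℕ)
    (w : List (Fin d → ℤ)) :
    normVec Ns (List.replicate ℓ 0 ++ w) = normVec Ns w := by
  unfold normVec
  have h : ∀ j : Fin d, normExt (Ns j) (comp (List.replicate ℓ 0 ++ w) j)
      = normExt (Ns j) (comp w j) := by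
    intro j
    rw [comp_replicate_append, normExt_replicate_append]
  simp only [h]

lemma pdfa_evalFrom_none {α σ : Type} (M : PDFA α σ) (w : List α) :
    w.foldl (fun o a => o.bind fun p => M.step p a) (none : Option σ) = none := by
  induction w with
  | nil => rfl
  | cons a w ih => simpa using ih

lemma pdfa_evalFrom_append {α σ : Type} (M : PDFA α σ) (q : σ) (x y : List α) :
    M.evalFrom q (x ++ y) = (M.evalFrom q x).bind (fun r => M.evalFrom r y) := by
  unfold PDFA.evalFrom
  rw [List.foldl_append]
  cases h : x.foldl (fun o a => o.bind fun p => M.step p a) (some q) with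
  | none => simp [pdfa_evalFrom_none]
  | some r => simp

lemma cancel_aux {α : Type} (v₁ v₂ s V : List α) (z : α) (k₁ k₂ : ℕ)
    (h0₁ : v₁.head? ≠ some z) (h0₂ : v₂.head? ≠ some z)
    (h₁ : v₁ ++ s = List.replicate k₁ z ++ V)
    (h₂ : v₂ ++ s = List.replicate k₂ z ++ V) : v₁ = v₂ := by
  have key : ∀ (a b : List α) (m n : ℕ), a.head? ≠ some z →
      a ++ s = List.replicate m z ++ V → b ++ s = List.replicate n z ++ V →
      n ≤ m → a = b := by
    intro a b m n ha h₁ h₂ hle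
    have : a ++ s = (List.replicate (m - n) z ++ b) ++ s := by
      rw [h₁, List.append_assoc, h₂, ← List.append_assoc,
        ← List.replicate_add, Nat.sub_add_cancel hle]
    have hab : a = List.replicate (m - n) z ++ b := List.append_cancel_right this
    rcases Nat.eq_or_lt_of_le hle with h | h
    · simpa [h] using hab
    · exfalso
      apply ha
      rw [hab]
      have : 0 < m - n := Nat.sub_pos_of_lt h
      cases hmn : m - n with
      | zero => omega
      | succ t => simp [hmn, List.replicate_succ]
  rcases le_total k₂ k₁ with h | h
  · exact key v₁ v₂ k₁ k₂ h0₁ h₁ h₂ h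
  · exact (key v₂ v₁ k₂ k₁ h0₂ h₂ h₁ h).symm

/-- Let `U` be a `d`-tuple of numeration systems, `A ⊂ ℤ^d` a finite alphabet and `M`
a trim DFA accepting `{(u,v) ∈ (A × (A_U ∪ -A_U))* : v ∈ 0* ν_U(u)}`, with initial
state `i`.  If, for words `v₁, v₂` over `A_U ∪ -A_U` not beginning with the letter
`0`, reading `(0^{ℓ₁} a, v₁)` and `(0^{ℓ₂} a, v₂)` from `i` both lead to the state
`p`, then `ℓ₁ = ℓ₂` and `v₁ = v₂`. -/
theorem normalizer_unique_delay {d : ℕ} (Ns : Fin d → NumSys)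
    (A : Set (Fin d → ℤ)) (hA : A.Finite)
    (Q : Type) [Fintype Q] (M : PDFA ((Fin d → ℤ) × (Fin d → ℤ)) Q)
    (hacc : M.accepts = NormLangVec Ns A) (htrim : M.Trim)
    (p : Q) (a : Fin d → ℤ) (ha : a ∈ A) (ℓ₁ ℓ₂ : ℕ)
    (v₁ v₂ : List (Fin d → ℤ))
    (hv₁ : ∀ x ∈ v₁, x ∈ symAlph Ns) (hv₂ : ∀ x ∈ v₂, x ∈ symAlph Ns)
    (h0₁ : v₁.head? ≠ some (0 : Fin d → ℤ)) (h0₂ : v₂.head? ≠ some (0 : Fin d → ℤ))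
    (p₁ p₂ : List ((Fin d → ℤ) × (Fin d → ℤ)))
    (hp₁fst : p₁.map Prod.fst = List.replicate ℓ₁ (0 : Fin d → ℤ) ++ [a])
    (hp₁snd : p₁.map Prod.snd = v₁)
    (hp₂fst : p₂.map Prod.fst = List.replicate ℓ₂ (0 : Fin d → ℤ) ++ [a])
    (hp₂snd : p₂.map Prod.snd = v₂)
    (hrun₁ : M.evalFrom M.start p₁ = some p)
    (hrun₂ : M.evalFrom M.start p₂ = some p) :
    ℓ₁ = ℓ₂ ∧ v₁ = v₂ := by
  -- get a word from p to an accepting state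
  obtain ⟨-, w, pacc, hpaccmem, hw⟩ := htrim p
  have hacc₁ : p₁ ++ w ∈ M.accepts :=
    ⟨pacc, hpaccmem, by rw [pdfa_evalFrom_append, hrun₁]; exact hw⟩
  have hacc₂ : p₂ ++ w ∈ M.accepts :=
    ⟨pacc, hpaccmem, by rw [pdfa_evalFrom_append, hrun₂]; exact hw⟩
  rw [hacc] at hacc₁ hacc₂
  obtain ⟨-, k₁, hk₁⟩ := hacc₁
  obtain ⟨-, k₂, hk₂⟩ := hacc₂
  rw [List.map_append, List.map_append, hp₁fst, hp₁snd] at hk₁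
  rw [List.map_append, List.map_append, hp₂fst, hp₂snd] at hk₂
  set s := w.map Prod.snd
  set r := [a] ++ w.map Prod.fst with hr
  have e₁ : List.replicate ℓ₁ (0 : Fin d → ℤ) ++ [a] ++ w.map Prod.fst
      = List.replicate ℓ₁ (0 : Fin d → ℤ) ++ r := by rw [hr, List.append_assoc]
  have e₂ : List.replicate ℓ₂ (0 : Fin d → ℤ) ++ [a] ++ w.map Prod.fst
      = List.replicate ℓ₂ (0 : Fin d → ℤ) ++ r := by rw [hr, List.append_assoc]
  rw [e₁, normVec_replicate_append] at hk₁
  rw [e₂, normVec_replicate_append] at hk₂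
  have hv : v₁ = v₂ := cancel_aux v₁ v₂ s (normVec Ns r) 0 k₁ k₂ h0₁ h0₂ hk₁ hk₂
  refine ⟨?_, hv⟩
  have l₁ : v₁.length = ℓ₁ + 1 := by
    rw [← hp₁snd, List.length_map, ← (List.length_map Prod.fst : (p₁.map Prod.fst).length = p₁.length), hp₁fst]
    simp
  have l₂ : v₂.length = ℓ₂ + 1 := by
    rw [← hp₂snd, List.length_map, ← (List.length_map Prod.fst : (p₂.map Prod.fst).length = p₂.length), hp₂fst]
    simp
  rw [hv] at l₁
  omega
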